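/- (Ben-David et al. bound) For every hypothesis h ∈ H, the target risk satisfies R_T(h) ≤ R_S(h) + d_{HΔH}(p_S, p_T) + λ_H, where λ_H = inf_{h' ∈ H} [R_S(h') + R_T(h')]. (In the formal version, for any h* ∈ H one shows R_T(h) ≤ R_S(h) + d_{HΔH}(p_S, p_T) + R_S(h*) + R_T(h*).) -/

import Mathlib

open MeasureTheory

/-- Zero-one loss on binary labels. -/
noncomputable def zoLoss (a b : Bool) : ℝ := if a = b then 0 else 1

/-- Expected disagreement between two binary hypotheses under a distribution on `X`. -/
noncomputable def riskD {X : Type*} [MeasurableSpace X] (μ : Measure X)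
    (h h' : X → Bool) : ℝ := ∫ x, zoLoss (h x) (h' x) ∂μ

/-- Risk of a hypothesis against true labels, for a joint distribution on `X × Bool`. -/
noncomputable def riskJ {X : Type*} [MeasurableSpace X] (μ : Measure (X × Bool))
    (h : X → Bool) : ℝ := ∫ p, zoLoss (h p.1) p.2 ∂μ

/-- The `HΔH`-divergence between two distributions on `X`. -/
noncomputable def hDiv {X : Type*} [MeasurableSpace X] (μ ν : Measure X)
    (H : Set (X → Bool)) : ℝ :=
  sSup {r | ∃ h ∈ H, ∃ h' ∈ H, r = |riskD μ h h' - riskD ν h h'|}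

/-- The `F_{GΔG}`-divergence between two distributions on `X`. -/
noncomputable def fggDiv {X Z : Type*} [MeasurableSpace X] (μ ν : Measure X)
    (F : Set (Z → Bool)) (G : Set (X → Z)) : ℝ :=
  sSup {r | ∃ f ∈ F, ∃ g ∈ G, ∃ g' ∈ G,
    r = |riskD μ (f ∘ g) (f ∘ g') - riskD ν (f ∘ g) (f ∘ g')|}

lemma zo_nonneg (a b : Bool) : 0 ≤ zoLoss a b := by unfold zoLoss; split <;> norm_num
lemma zo_le_one (a b : Bool) : zoLoss a b ≤ 1 := by unfold zoLoss; split <;> norm_num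
lemma zo_tri (a b c : Bool) : zoLoss a c ≤ zoLoss a b + zoLoss b c := by
  rcases a <;> rcases b <;> rcases c <;> simp [zoLoss]
lemma zo_comm (a b : Bool) : zoLoss a b = zoLoss b a := by
  rcases a <;> rcases b <;> simp [zoLoss]

lemma meas_zo2 : Measurable (fun p : Bool × Bool => zoLoss p.1 p.2) :=
  measurable_of_countable _

lemma meas_zo {α : Type*} [MeasurableSpace α] {f g : α → Bool}
    (hf : Measurable f) (hg : Measurable g) :
    Measurable (fun x => zoLoss (f x) (g x)) :=
  meas_zo2.comp (hf.prodMk hg)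

lemma integrable_zo {α : Type*} [MeasurableSpace α] (μ : Measure α) [IsProbabilityMeasure μ]
    {f g : α → Bool} (hf : Measurable f) (hg : Measurable g) :
    Integrable (fun x => zoLoss (f x) (g x)) μ := by
  refine (integrable_const (1:ℝ)).mono' (meas_zo hf hg).aestronglyMeasurable ?_
  exact ae_of_all _ fun x => by
    rw [Real.norm_eq_abs, abs_of_nonneg (zo_nonneg _ _)]; exact zo_le_one _ _

lemma riskD_nonneg {X : Type*} [MeasurableSpace X] (μ : Measure X) (h h' : X → Bool) :
    0 ≤ riskD μ h h' := integral_nonneg fun x => zo_nonneg _ _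

lemma riskD_le_one {X : Type*} [MeasurableSpace X] (μ : Measure X) [IsProbabilityMeasure μ]
    {h h' : X → Bool} (hh : Measurable h) (hh' : Measurable h') :
    riskD μ h h' ≤ 1 := by
  have := integral_mono (integrable_zo μ hh hh') (integrable_const (1:ℝ))
    (fun x => zo_le_one (h x) (h' x))
  simpa [riskD] using this

theorem ben_david_bound {X : Type*} [MeasurableSpace X]
    (pS pT : Measure (X × Bool)) [IsProbabilityMeasure pS] [IsProbabilityMeasure pT]
    (H : Set (X → Bool)) (hH : ∀ h ∈ H, Measurable h)
    (h : X → Bool) (hh : h ∈ H) (hstar : X → Bool) (hhstar : hstar ∈ H) :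
    riskJ pT h ≤ riskJ pS h + hDiv (pS.map Prod.fst) (pT.map Prod.fst) H
      + riskJ pS hstar + riskJ pT hstar := by
  have mh := hH h hh
  have mh' := hH hstar hhstar
  -- push forward
  have hmapS : riskD (pS.map Prod.fst) h hstar = ∫ p, zoLoss (h p.1) (hstar p.1) ∂pS := by
    unfold riskD
    rw [integral_map measurable_fst.aemeasurable
      ((meas_zo mh mh').aestronglyMeasurable)]
  have hmapT : riskD (pT.map Prod.fst) h hstar = ∫ p, zoLoss (h p.1) (hstar p.1) ∂pT := by
    unfold riskD
    rw [integral_map measurable_fst.aemeasurable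
      ((meas_zo mh mh').aestronglyMeasurable)]
  have intJ : ∀ (μ : Measure (X × Bool)) [IsProbabilityMeasure μ] (f : X → Bool),
      Measurable f → Integrable (fun p : X × Bool => zoLoss (f p.1) p.2) μ :=
    fun μ _ f hf => integrable_zo μ (hf.comp measurable_fst) measurable_snd
  have intD : ∀ (μ : Measure (X × Bool)) [IsProbabilityMeasure μ],
      Integrable (fun p : X × Bool => zoLoss (h p.1) (hstar p.1)) μ :=
    fun μ _ => integrable_zo μ (mh.comp measurable_fst) (mh'.comp measurable_fst)
  -- Step 1: R_T(h) ≤ R_T(h,h*) + R_T(h*)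
  have step1 : riskJ pT h ≤ riskD (pT.map Prod.fst) h hstar + riskJ pT hstar := by
    rw [hmapT]
    unfold riskJ
    rw [← integral_add (intD pT) (intJ pT hstar mh')]
    exact integral_mono (intJ pT h mh) ((intD pT).add (intJ pT hstar mh'))
      fun p => zo_tri _ _ _
  -- Step 2: R_S(h,h*) ≤ R_S(h) + R_S(h*)
  have step2 : riskD (pS.map Prod.fst) h hstar ≤ riskJ pS h + riskJ pS hstar := by
    rw [hmapS]
    unfold riskJ
    rw [← integral_add (intJ pS h mh) (intJ pS hstar mh')]
    refine integral_mono (intD pS) ((intJ pS h mh).add (intJ pS hstar mh')) fun p => ?_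
    calc zoLoss (h p.1) (hstar p.1) ≤ zoLoss (h p.1) p.2 + zoLoss p.2 (hstar p.1) :=
          zo_tri _ _ _
      _ = zoLoss (h p.1) p.2 + zoLoss (hstar p.1) p.2 := by rw [zo_comm p.2]
  -- Step 3: |R_S(h,h*) - R_T(h,h*)| ≤ hDiv
  have step3 : |riskD (pS.map Prod.fst) h hstar - riskD (pT.map Prod.fst) h hstar|
      ≤ hDiv (pS.map Prod.fst) (pT.map Prod.fst) H := by
    apply le_csSup
    · refine ⟨2, ?_⟩
      rintro r ⟨f, hf, g, hg, rfl⟩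
      have h1 : riskD (pS.map Prod.fst) f g ≤ 1 := by
        rw [show riskD (pS.map Prod.fst) f g = ∫ p, zoLoss (f p.1) (g p.1) ∂pS by
          unfold riskD
          rw [integral_map measurable_fst.aemeasurable
            ((meas_zo (hH f hf) (hH g hg)).aestronglyMeasurable)]]
        have := riskD_le_one (X := X × Bool) pS
          (h := f ∘ Prod.fst) (h' := g ∘ Prod.fst)
          ((hH f hf).comp measurable_fst) ((hH g hg).comp measurable_fst)
        simpa [riskD, Function.comp] using this
      have h2 : riskD (pT.map Prod.fst) f g ≤ 1 := by
        rw [show riskD (pT.map Prod.fst) f g = ∫ p, zoLoss (f p.1) (g p.1) ∂pT by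
          unfold riskD
          rw [integral_map measurable_fst.aemeasurable
            ((meas_zo (hH f hf) (hH g hg)).aestronglyMeasurable)]]
        have := riskD_le_one (X := X × Bool) pT
          (h := f ∘ Prod.fst) (h' := g ∘ Prod.fst)
          ((hH f hf).comp measurable_fst) ((hH g hg).comp measurable_fst)
        simpa [riskD, Function.comp] using this
      have h3 := riskD_nonneg (pS.map Prod.fst) f g
      have h4 := riskD_nonneg (pT.map Prod.fst) f g
      rw [abs_sub_le_iff]; constructor <;> linarith
    · exact ⟨h, hh, hstar, hhstar, rfl⟩
  have step4 : riskD (pT.map Prod.fst) h hstar ≤ riskD (pS.map Prod.fst) h hstar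
      + hDiv (pS.map Prod.fst) (pT.map Prod.fst) H := by
    have := abs_sub_le_iff.mp (le_of_eq (rfl :
      |riskD (pS.map Prod.fst) h hstar - riskD (pT.map Prod.fst) h hstar| = _)) |>.2
    linarith [neg_abs_le (riskD (pS.map Prod.fst) h hstar - riskD (pT.map Prod.fst) h hstar),
      step3]
  linarith [step1, step2, step4]
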